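/- Let (A, μ, α) be a regular Hom-Novikov superalgebra (α an algebra automorphism). Define [x,y] = xy − (−1)^{|x||y|} yx and [x,y]_{α⁻¹} = α⁻¹([x,y]). Then (A, [·,·]_{α⁻¹}) is a Lie superalgebra. -/

import Mathlib

/-- The sub-adjacent super-commutator bracket `[x,y] = xy - (-1)^(|x||y|) yx`
for homogeneous `x` of degree `i` and `y` of degree `j`. -/
def sbr {𝕜 A : Type*} [Field 𝕜] [AddCommGroup A] [Module 𝕜 A]
    (mul : A →ₗ[𝕜] A →ₗ[𝕜] A) (i j : ZMod 2) (x y : A) : A :=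
  mul x y - ((-1 : 𝕜) ^ (i.val * j.val)) • mul y x

set_option maxHeartbeats 1000000 in
theorem stmt1
    (𝕜 A : Type*) [Field 𝕜] [AddCommGroup A] [Module 𝕜 A]
    (G : ZMod 2 → Submodule 𝕜 A) (hG : DirectSum.IsInternal G)
    (mul : A →ₗ[𝕜] A →ₗ[𝕜] A) (α : A →ₗ[𝕜] A)
    (hmul_even : ∀ i j : ZMod 2, ∀ x ∈ G i, ∀ y ∈ G j, mul x y ∈ G (i + j))
    (hα_even : ∀ i : ZMod 2, ∀ x ∈ G i, α x ∈ G i)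
    (hα_mul : ∀ x y : A, α (mul x y) = mul (α x) (α y))
    (hls : ∀ i j k : ZMod 2, ∀ x ∈ G i, ∀ y ∈ G j, ∀ z ∈ G k,
      mul (mul x y) (α z) - mul (α x) (mul y z)
        = ((-1 : 𝕜) ^ (i.val * j.val)) • (mul (mul y x) (α z) - mul (α y) (mul x z)))
    (hrn : ∀ i j k : ZMod 2, ∀ x ∈ G i, ∀ y ∈ G j, ∀ z ∈ G k,
      mul (mul x y) (α z) = ((-1 : 𝕜) ^ (j.val * k.val)) • mul (mul x z) (α y))
    (β : A →ₗ[𝕜] A) (hβα : ∀ x : A, β (α x) = x) (hαβ : ∀ x : A, α (β x) = x) :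
    (∀ i j : ZMod 2, ∀ x ∈ G i, ∀ y ∈ G j,
      β (sbr mul i j x y) = -(((-1 : 𝕜) ^ (i.val * j.val)) • β (sbr mul j i y x))) ∧
    (∀ i j k : ZMod 2, ∀ x ∈ G i, ∀ y ∈ G j, ∀ z ∈ G k,
      ((-1 : 𝕜) ^ (i.val * k.val)) • β (sbr mul i (j + k) x (β (sbr mul j k y z)))
        + ((-1 : 𝕜) ^ (i.val * j.val)) • β (sbr mul j (k + i) y (β (sbr mul k i z x)))
        + ((-1 : 𝕜) ^ (j.val * k.val)) • β (sbr mul k (i + j) z (β (sbr mul i j x y))) = 0) := by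
  have hβ_mul : ∀ a b : A, β (mul a b) = mul (β a) (β b) := by
    intro a b
    conv_lhs => rw [← hαβ a, ← hαβ b, ← hα_mul, hβα]
  constructor
  · intro i j x hx y hy
    have he : ((-1:𝕜)^(i.val*j.val)) * ((-1:𝕜)^(j.val*i.val)) = 1 := by
      rw [mul_comm j.val i.val, ← pow_add]
      exact Even.neg_one_pow ⟨_, rfl⟩
    simp only [sbr, map_sub, map_smul, smul_sub, smul_smul, he, one_smul, neg_sub]
  · intro i j k x hx y hy z hz
    have h1 := hls i j k x hx y hy z hz
    have h2 := hls k i j z hz x hx y hy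
    have h3 := hls j k i y hy z hz x hx
    have hterm : ∀ (m n : ZMod 2) (u w : A),
        β (sbr mul m n u (β w)) = β (β (sbr mul m n (α u) w)) := by
      intro m n u w
      congr 1
      simp only [sbr, map_sub, map_smul, hβ_mul, hβα]
    have key : ((-1 : 𝕜) ^ (i.val * k.val)) • sbr mul i (j + k) (α x) (sbr mul j k y z)
        + ((-1 : 𝕜) ^ (i.val * j.val)) • sbr mul j (k + i) (α y) (sbr mul k i z x)
        + ((-1 : 𝕜) ^ (j.val * k.val)) • sbr mul k (i + j) (α z) (sbr mul i j x y) = 0 := by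
      clear hterm hx hy hz
      simp only [sbr, ZMod.val_add]
      fin_cases i <;> fin_cases j <;> fin_cases k <;>
        (simp only [sbr, map_sub, map_smul, LinearMap.sub_apply, LinearMap.smul_apply]
         norm_num [show ((2:ZMod 2)).val = 0 from rfl, show ((1:ZMod 2)).val = 1 from rfl,
           show ((0:ZMod 2)).val = 0 from rfl,
           show ∀ a : Fin 2, ZMod.val (n := 2) a = a.val from fun _ => rfl] at h1 h2 h3 ⊢)
      · linear_combination (norm := module) (-1:𝕜) • h1 + (-1:𝕜) • h2 + (-1:𝕜) • h3
      · linear_combination (norm := module) (-1:𝕜) • h1 + (-1:𝕜) • h2 + (-1:𝕜) • h3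
      · linear_combination (norm := module) (-1:𝕜) • h1 + (-1:𝕜) • h2 + (-1:𝕜) • h3
      · linear_combination (norm := module) (-1:𝕜) • h1 + (1:𝕜) • h2 + (-1:𝕜) • h3
      · linear_combination (norm := module) (-1:𝕜) • h1 + (-1:𝕜) • h2 + (-1:𝕜) • h3
      · linear_combination (norm := module) (1:𝕜) • h1 + (-1:𝕜) • h2 + (-1:𝕜) • h3
      · linear_combination (norm := module) (-1:𝕜) • h1 + (-1:𝕜) • h2 + (1:𝕜) • h3
      · linear_combination (norm := module) (1:𝕜) • h1 + (1:𝕜) • h2 + (1:𝕜) • h3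
    rw [hterm, hterm, hterm]
    simp only [← map_smul, ← map_add, key, map_zero]
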